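/- Let i ≥ 0, j ≥ 0 and k ≥ 2 be integers, and let ℓ ≥ 2k + i − 1. Then the graph G_{k,ℓ} does not contain two (i,j)-disjoint spanning trees. -/
import Mathlib


open SimpleGraph

variable {V : Type*}

/-- `T` is a spanning tree of `G`: a subgraph on all of `V` that is connected and acyclic. -/
def IsSpanningTree (G T : SimpleGraph V) : Prop :=
  T ≤ G ∧ T.Connected ∧ T.IsAcyclic

/-- The set of inner vertices of `T` (degree at least 2). -/
def innerSet (T : SimpleGraph V) : Set V :=
  {v | 2 ≤ (T.neighborSet v).ncard}

/-- Vertices that are inner vertices of at least two trees of the family. -/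
def innerMulti {k : ℕ} (T : Fin k → SimpleGraph V) : Set V :=
  {v | ∃ i j : Fin k, i ≠ j ∧ v ∈ innerSet (T i) ∧ v ∈ innerSet (T j)}

/-- Edges that belong to at least two trees of the family. -/
def edgeMulti {k : ℕ} (T : Fin k → SimpleGraph V) : Set (Sym2 V) :=
  {e | ∃ i j : Fin k, i ≠ j ∧ e ∈ (T i).edgeSet ∧ e ∈ (T j).edgeSet}

/-- A connected dominating set. -/
def IsConnDomSet (G : SimpleGraph V) (D : Set V) : Prop :=
  (G.induce D).Connected ∧ ∀ v ∉ D, ∃ w ∈ D, G.Adj v w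

/-- The graph `G_{k,ℓ}`: incidence graph of the complete `k`-uniform hypergraph on
`ℓ` vertices. Vertex `Sum.inl i` is adjacent to `Sum.inr A` iff `i ∈ A`. -/
def hyperIncidenceGraph (k l : ℕ) :
    SimpleGraph (Fin l ⊕ {A : Finset (Fin l) // A.card = k}) :=
  SimpleGraph.fromRel (fun x y =>
    match x, y with
    | Sum.inl i, Sum.inr A => i ∈ A.1
    | _, _ => False)


lemma walk_closed {W : Type*} {T : SimpleGraph W} {s : Set W}
    (hs : ∀ x ∈ s, ∀ y, T.Adj x y → y ∈ s) :
    ∀ {x y : W}, T.Walk x y → x ∈ s → y ∈ s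
  | _, _, SimpleGraph.Walk.nil, hx => hx
  | _, _, SimpleGraph.Walk.cons h p, hx => walk_closed hs p (hs _ hx _ h)

lemma adj_inr {k l : ℕ} {A : {A : Finset (Fin l) // A.card = k}}
    {y : Fin l ⊕ {A : Finset (Fin l) // A.card = k}}
    (h : (hyperIncidenceGraph k l).Adj (Sum.inr A) y) :
    ∃ v, y = Sum.inl v ∧ v ∈ A.1 := by
  cases y with
  | inl v =>
    refine ⟨v, rfl, ?_⟩
    simp only [hyperIncidenceGraph, SimpleGraph.fromRel_adj] at h
    tauto
  | inr B =>
    exfalso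
    simp only [hyperIncidenceGraph, SimpleGraph.fromRel_adj] at h
    tauto

lemma leaves_card_lt {k l : ℕ} (hk : 2 ≤ k) (hkl : k < l)
    {T : SimpleGraph (Fin l ⊕ {A : Finset (Fin l) // A.card = k})}
    (hT : IsSpanningTree (hyperIncidenceGraph k l) T) :
    (Finset.univ.filter
      (fun v : Fin l => (T.neighborSet (Sum.inl v)).ncard < 2)).card < k := by
  by_contra hcon
  push_neg at hcon
  obtain ⟨A, hAsub, hAcard⟩ := Finset.exists_subset_card_eq hcon
  set uA : Fin l ⊕ {A : Finset (Fin l) // A.card = k} := Sum.inr ⟨A, hAcard⟩ with huA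
  set s : Set (Fin l ⊕ {A : Finset (Fin l) // A.card = k}) :=
    insert uA (T.neighborSet uA) with hs
  have hclosed : ∀ x ∈ s, ∀ y, T.Adj x y → y ∈ s := by
    intro x hx y hxy
    rcases hx with hx | hx
    · subst hx
      exact Set.mem_insert_of_mem _ hxy
    · -- x is a T-neighbor of uA, so x = Sum.inl v with v ∈ A, a "leaf"
      obtain ⟨v, hveq, hvA⟩ := adj_inr (hT.1 hx)
      subst hveq
      have hvB := hAsub hvA
      simp only [Finset.mem_filter] at hvB
      -- uA and y are both T-neighbors of Sum.inl v; neighborSet has < 2 elements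
      have h1 : uA ∈ T.neighborSet (Sum.inl v) := T.adj_symm hx
      have h2 : y ∈ T.neighborSet (Sum.inl v) := hxy
      by_cases hyu : y = uA
      · subst hyu; exact Set.mem_insert _ _
      · exfalso
        have : 1 < (T.neighborSet (Sum.inl v)).ncard := by
          rw [Set.one_lt_ncard (Set.toFinite _)]
          exact ⟨uA, h1, y, h2, fun h => hyu h.symm⟩
        omega
  -- find a vertex not in A
  have : ∃ w : Fin l, w ∉ A := by
    by_contra hall
    push_neg at hall
    have : A = Finset.univ := Finset.eq_univ_iff_forall.2 hall
    rw [this, Finset.card_univ, Fintype.card_fin] at hAcard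
    omega
  obtain ⟨w, hw⟩ := this
  have hwns : Sum.inl w ∉ s := by
    intro hmem
    rcases hmem with hmem | hmem
    · simp [huA] at hmem
    · obtain ⟨v, hveq, hvA⟩ := adj_inr (hT.1 hmem)
      rw [Sum.inl.injEq] at hveq
      exact hw (hveq ▸ hvA)
  obtain ⟨p⟩ := hT.2.1.preconnected uA (Sum.inl w)
  exact hwns (walk_closed hclosed p (Set.mem_insert _ _))

/-- For `ℓ ≥ 2k + i - 1`, the graph `G_{k,ℓ}` contains no two (i,j)-disjoint
spanning trees. -/
theorem hyperIncidence_no_two_disjoint_trees (i j k l : ℕ) (hk : 2 ≤ k)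
    (hl : 2 * k + i - 1 ≤ l) :
    ¬ ∃ T : Fin 2 → SimpleGraph (Fin l ⊕ {A : Finset (Fin l) // A.card = k}),
        (∀ m, IsSpanningTree (hyperIncidenceGraph k l) (T m)) ∧
        (innerMulti T).ncard ≤ i ∧ (edgeMulti T).ncard ≤ j := by
  rintro ⟨T, hT, hi, hj⟩
  have hkl : k < l := by omega
  set B : Fin 2 → Finset (Fin l) := fun m => Finset.univ.filter
      (fun v : Fin l => ((T m).neighborSet (Sum.inl v)).ncard < 2) with hB
  have hB0 : (B 0).card < k := leaves_card_lt hk hkl (hT 0)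
  have hB1 : (B 1).card < k := leaves_card_lt hk hkl (hT 1)
  set S : Finset (Fin l) := Finset.univ \ (B 0 ∪ B 1) with hS
  have hScard : S.card = l - (B 0 ∪ B 1).card := by
    rw [hS, Finset.card_sdiff_of_subset (Finset.subset_univ _), Finset.card_univ, Fintype.card_fin]
  have hunion : (B 0 ∪ B 1).card ≤ (B 0).card + (B 1).card := Finset.card_union_le _ _
  have hsub : (Sum.inl '' (S : Set (Fin l)) :
      Set (Fin l ⊕ {A : Finset (Fin l) // A.card = k})) ⊆ innerMulti T := by
    rintro x ⟨v, hv, rfl⟩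
    rw [Finset.mem_coe, hS, Finset.mem_sdiff, Finset.mem_union] at hv
    have h0 : v ∉ B 0 := fun h => hv.2 (Or.inl h)
    have h1 : v ∉ B 1 := fun h => hv.2 (Or.inr h)
    simp only [hB, Finset.mem_filter, Finset.mem_univ, true_and, not_lt] at h0 h1
    exact ⟨0, 1, by decide, h0, h1⟩
  have himg : (Sum.inl '' (S : Set (Fin l)) :
      Set (Fin l ⊕ {A : Finset (Fin l) // A.card = k})).ncard = S.card := by
    rw [Set.ncard_image_of_injective _ Sum.inl_injective, Set.ncard_coe_finset]
  have hle : S.card ≤ (innerMulti T).ncard := by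
    rw [← himg]
    exact Set.ncard_le_ncard hsub (Set.toFinite _)
  omega
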